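/- Let A, B : S → Type and A', B' : T → Type be copresheaves on small categories with natural transformations α : A → B and α' : A' → B'. If there exists a natural transformation Ran_{A'} B' → Ran_A B, then for every copresheaf X : S → Type: (i) if Hom(X, A) is nonempty, then Hom((Lan_A X) ∘ A', A') is nonempty; and (ii) if Hom((Lan_A X) ∘ A', B') is nonempty, then Hom(X, B) is nonempty. That is, X ↦ (Lan_A X) ∘ A' is a valid reduction from PCSP(A,B) to PCSP(A',B'). -/

import Mathlib

open CategoryTheory

universe u

/-- Let `(A,B)` and `(A',B')` be promise templates (copresheaves with `α : A ⟶ B`,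
`α' : A' ⟶ B'`), let `L = Lan_A` be a left adjoint to precomposition `(− ∘ A)` and let
`RanS`, `RanT` be the right adjoints to precomposition along `A` and `A'` respectively.
If there is a natural transformation `Ran_{A'} B' ⟶ Ran_A B`, then `X ↦ (Lan_A X) ∘ A'`
is a valid reduction from `PCSP(A,B)` to `PCSP(A',B')`: it preserves Yes-instances and
reflects No-instances. -/
theorem stmt12 {S : Type u} [SmallCategory S] {T : Type u} [SmallCategory T]
    (A B : S ⥤ Type u) (α : A ⟶ B) (A' B' : T ⥤ Type u) (α' : A' ⟶ B')
    (L : (S ⥤ Type u) ⥤ (Type u ⥤ Type u))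
    (adjL : L ⊣ (Functor.whiskeringLeft S (Type u) (Type u)).obj A)
    (RanS : (S ⥤ Type u) ⥤ (Type u ⥤ Type u))
    (adjS : (Functor.whiskeringLeft S (Type u) (Type u)).obj A ⊣ RanS)
    (RanT : (T ⥤ Type u) ⥤ (Type u ⥤ Type u))
    (adjT : (Functor.whiskeringLeft T (Type u) (Type u)).obj A' ⊣ RanT)
    (ρ : RanT.obj B' ⟶ RanS.obj B) :
    ∀ X : S ⥤ Type u,
      (Nonempty (X ⟶ A) → Nonempty ((A' ⋙ L.obj X) ⟶ A')) ∧
      (Nonempty ((A' ⋙ L.obj X) ⟶ B') → Nonempty (X ⟶ B)) := by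
  intro X
  constructor
  · rintro ⟨f⟩
    exact ⟨Functor.whiskerLeft A' ((adjL.homEquiv X (𝟭 (Type u))).symm
      (f ≫ A.rightUnitor.inv)) ≫ (A'.rightUnitor).hom⟩
  · rintro ⟨h⟩
    exact ⟨(adjL.homEquiv X (RanS.obj B)) ((adjT.homEquiv (L.obj X) B' h) ≫ ρ) ≫
      adjS.counit.app B⟩
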